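/- Every element z of the rational Puiseux field k̃ = Quot(Ā) has a terminating continued fraction: the recursive algorithm (subtract the polynomial part, invert the remainder) reaches a step where z_n = f_n after finitely many steps. -/

import Mathlib

universe u

/-- Evaluation of a finite continued fraction `[f₀, f₁, …, f_N]` in a field,
`cfEval [a] = a`, `cfEval (a :: l) = a + (cfEval l)⁻¹` (with the convention `0⁻¹ = 0`). -/
def cfEval {L : Type u} [Field L] : List L → L
  | [] => 0
  | a :: l => a + (cfEval l)⁻¹

/-- The Moebius maps `ρ_n = σ_n ∘ ⋯ ∘ σ_0`, where `σ_i x = (x - f_i)⁻¹`. -/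
def rho {L : Type u} [Field L] (f : ℕ → L) : ℕ → L → L
  | 0, x => (x - f 0)⁻¹
  | n + 1, x => (rho f n x - f (n + 1))⁻¹

/-- The derivative `ρ_n'` of `ρ_n`, computed by the chain rule from
`σ_i'(x) = -((x - f_i)⁻¹)²`. -/
def rho' {L : Type u} [Field L] (f : ℕ → L) : ℕ → L → L
  | 0, x => -((x - f 0)⁻¹) ^ 2
  | n + 1, x => -((rho f n x - f (n + 1))⁻¹) ^ 2 * rho' f n x

/-- An abstract presentation of the completion `K̂` of the Puiseux field
`E⟨⟨t⁻¹⟩⟩` over a field `E`.  The field `K` carries an additive valuation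
`ν` with values in `ℚ` on nonzero elements (normalized by `ν (t^r) = -r`,
where `mono r` plays the role of the monomial `t^r`), the subfield `E` is
embedded via `emb`, the simple "Laurent Puiseux polynomials" (the ring
generated by `E` and all rational powers of `t`) are dense, and `K` is
complete for `ν`. -/
structure PuiseuxCompletion (E : Type u) [Field E] where
  K : Type u
  [fieldK : Field K]
  ν : K → ℚ
  emb : E →+* K
  mono : ℚ → K
  mono_zero : mono 0 = 1
  mono_mul : ∀ r s : ℚ, mono r * mono s = mono (r + s)
  ν_mono : ∀ r : ℚ, ν (mono r) = -r
  ν_emb : ∀ e : E, e ≠ 0 → ν (emb e) = 0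
  ν_mul : ∀ x y : K, x ≠ 0 → y ≠ 0 → ν (x * y) = ν x + ν y
  ν_add : ∀ x y : K, x ≠ 0 → y ≠ 0 → x + y ≠ 0 → min (ν x) (ν y) ≤ ν (x + y)
  dense' : ∀ z : K, ∀ C : ℚ,
    ∃ f ∈ Subring.closure (Set.range emb ∪ Set.range mono), z = f ∨ C < ν (z - f)
  complete' : ∀ uSeq : ℕ → K,
    (∀ C : ℚ, ∃ N : ℕ, ∀ m ≥ N, ∀ n ≥ N, uSeq m = uSeq n ∨ C < ν (uSeq m - uSeq n)) →
    ∃ z : K, ∀ C : ℚ, ∃ N : ℕ, ∀ n ≥ N, uSeq n = z ∨ C < ν (uSeq n - z)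

attribute [instance] PuiseuxCompletion.fieldK

namespace PuiseuxCompletion

variable {E : Type u} [Field E] (P : PuiseuxCompletion E)

/-- The ring `Ā = E⟨t⟩` of Puiseux polynomials: finite `E`-linear combinations of
nonnegative rational powers of `t`. -/
def Abar : Subring P.K :=
  Subring.closure (Set.range P.emb ∪ P.mono '' {r : ℚ | 0 ≤ r})

/-- `deg f = -ν f`. -/
def deg (f : P.K) : ℚ := -P.ν f

/-- The rational Puiseux field `k̃ = Quot(Ā) = ⋃ₙ E(t^{1/n})`, as a subfield of `K̂`. -/
def ktilde : Subfield P.K := Subfield.closure (P.Abar : Set P.K)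

/-- `uSeq n → z` with respect to the valuation `ν`. -/
def TendsTo (uSeq : ℕ → P.K) (z : P.K) : Prop :=
  ∀ C : ℚ, ∃ N : ℕ, ∀ n ≥ N, uSeq n = z ∨ C < P.ν (uSeq n - z)

/-- One step of the continued fraction algorithm succeeds at index `i`:
`f i` is the Puiseux polynomial with `ν (z_i - f i) > 0`, the fraction does not
end at `i` (`z_i ≠ f i`), and `z_{i+1} = (z_i - f i)⁻¹`. -/
def CFStep (f zs : ℕ → P.K) (i : ℕ) : Prop :=
  f i ∈ P.Abar ∧ 0 < P.ν (zs i - f i) ∧ zs i ≠ f i ∧ zs (i + 1) = (zs i - f i)⁻¹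

/-- The `n`-th approximant `x_n = [f₀, …, f_n]_{ev}`. -/
def approx (f : ℕ → P.K) (n : ℕ) : P.K :=
  cfEval (List.ofFn fun i : Fin (n + 1) => f i)

/-- The continued fraction of `z` begins with the coefficients `f 0, …, f n`. -/
def CFBegins (f : ℕ → P.K) (n : ℕ) (z : P.K) : Prop :=
  ∃ zs : ℕ → P.K, zs 0 = z ∧ (∀ i < n, P.CFStep f zs i) ∧
    f n ∈ P.Abar ∧ (zs n = f n ∨ 0 < P.ν (zs n - f n))

/-- `z` is the value of the continued fraction expression with coefficients `f`
and length `L` (finite or infinite); the coefficients are Puiseux polynomials of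
positive degree after the zeroth one. -/
def CFExprEval (f : ℕ → P.K) (L : WithTop ℕ) (z : P.K) : Prop :=
  f 0 ∈ P.Abar ∧
  (∀ i : ℕ, 1 ≤ i → (i : WithTop ℕ) ≤ L → f i ∈ P.Abar ∧ 0 < P.deg (f i)) ∧
  ((∃ N : ℕ, L = (N : WithTop ℕ) ∧ z = P.approx f N) ∨
    (L = ⊤ ∧ P.TendsTo (fun n => P.approx f n) z))

/-- The equivalence relation `(a, r) ~ (a', r')` iff `r = r'` and `ν (a - a') ≥ r`
(the pairs define the same Berkovich point `η_{a,r}` of type II or III). -/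
def ballEquiv (p q : P.K × ℝ) : Prop :=
  p.2 = q.2 ∧ (p.1 = q.1 ∨ p.2 ≤ (P.ν (p.1 - q.1) : ℝ))

open scoped Classical in
/-- The Berkovich hyperbolic distance, computed on representatives. -/
noncomputable def berkDist (p q : P.K × ℝ) : ℝ :=
  if p.1 = q.1 ∨ min p.2 q.2 ≤ (P.ν (p.1 - q.1) : ℝ) then |p.2 - q.2|
  else p.2 + q.2 - 2 * (P.ν (p.1 - q.1) : ℝ)

/-- The closed ball `B_a^{[r]} = {b : ν (b - a) ≥ r}` corresponding to `η_{a,r}`. -/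
def closedBall (a : P.K) (r : ℝ) : Set P.K :=
  {b : P.K | b = a ∨ r ≤ (P.ν (b - a) : ℝ)}

/-- The Moebius transformation associated to a `2 × 2` matrix. -/
def mob (g : Matrix (Fin 2) (Fin 2) P.K) (x : P.K) : P.K :=
  (g 0 0 * x + g 0 1) / (g 1 0 * x + g 1 1)

/-- The ring `A_M = E[t^{1/M}]`. -/
def AM (M : ℕ) : Subring P.K :=
  Subring.closure (Set.range P.emb ∪ {P.mono (1 / (M : ℚ))})

/-- The field `E(t^{1/M})`, whose `ν`-completion inside `K̂` is `K_M = E((t^{-1/M}))`. -/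
def kM (M : ℕ) : Subfield P.K :=
  Subfield.closure (Set.range P.emb ∪ {P.mono (1 / (M : ℚ))})

end PuiseuxCompletion

namespace PuiseuxCompletion

open Polynomial

variable {E : Type u} [Field E] (P : PuiseuxCompletion E)

lemma nu_one : P.ν 1 = 0 := by
  have h := P.ν_mul 1 1 one_ne_zero one_ne_zero
  rw [one_mul] at h; linarith

lemma mono_ne_zero (r : ℚ) : P.mono r ≠ 0 := by
  intro h
  have h2 := P.mono_mul r (-r)
  rw [h, zero_mul, add_neg_cancel, P.mono_zero] at h2
  exact one_ne_zero h2.symm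

lemma emb_ne_zero {e : E} (he : e ≠ 0) : P.emb e ≠ 0 := by
  intro h
  exact he (P.emb.injective (by simpa using h))

lemma nu_neg {x : P.K} (hx : x ≠ 0) : P.ν (-x) = P.ν x := by
  have h1 : P.ν (-1 : P.K) = 0 := by
    have h := P.ν_mul (-1) (-1) (by simp) (by simp)
    rw [neg_mul_neg, one_mul, nu_one] at h; linarith
  have h := P.ν_mul (-1) x (by simp) hx
  rwa [neg_one_mul, h1, zero_add] at h

lemma nu_inv {x : P.K} (hx : x ≠ 0) : P.ν x⁻¹ = -P.ν x := by
  have h := P.ν_mul x x⁻¹ hx (inv_ne_zero hx)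
  rw [mul_inv_cancel₀ hx, nu_one] at h; linarith

lemma nu_add_eq {x y : P.K} (hx : x ≠ 0) (hy : y ≠ 0) (hlt : P.ν x < P.ν y) :
    x + y ≠ 0 ∧ P.ν (x + y) = P.ν x := by
  have hxy : x + y ≠ 0 := by
    intro h
    have hyx : y = -x := eq_neg_of_add_eq_zero_right (by linear_combination h)
    rw [hyx, nu_neg P hx] at hlt
    exact lt_irrefl _ hlt
  refine ⟨hxy, le_antisymm ?_ ?_⟩
  · by_contra hgt
    push_neg at hgt
    have h2 := P.ν_add (x + y) (-y) hxy (neg_ne_zero.mpr hy) (by simpa using hx)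
    rw [add_neg_cancel_right, nu_neg P hy] at h2
    exact absurd (lt_of_lt_of_le (lt_min hgt hlt) h2) (lt_irrefl _)
  · have h2 := P.ν_add x y hx hy hxy
    exact le_trans (le_min le_rfl hlt.le) h2

lemma mono_pow (r : ℚ) (n : ℕ) : P.mono r ^ n = P.mono (n * r) := by
  induction n with
  | zero => simp [P.mono_zero]
  | succ n ih =>
    rw [pow_succ, ih, P.mono_mul]
    congr 1
    push_cast
    ring

/-- Evaluation `E[X] → K`, `X ↦ t^{1/M}`. -/
noncomputable def pev (M : ℕ) : Polynomial E →+* P.K :=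
  Polynomial.eval₂RingHom P.emb (P.mono (1 / (M : ℚ)))

lemma pev_C (M : ℕ) (a : E) : pev P M (C a) = P.emb a := eval₂_C _ _

lemma pev_X_pow (M : ℕ) (n : ℕ) : pev P M (X ^ n) = P.mono ((n : ℚ) / M) := by
  rw [map_pow, pev, coe_eval₂RingHom, eval₂_X, mono_pow]
  congr 1
  ring

lemma pev_monomial (M : ℕ) (n : ℕ) (a : E) :
    pev P M (C a * X ^ n) = P.emb a * P.mono ((n : ℚ) / M) := by
  rw [map_mul, pev_C, pev_X_pow]

lemma pev_mem_Abar {M : ℕ} (hM : 1 ≤ M) (p : Polynomial E) : pev P M p ∈ P.Abar := by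
  induction p using Polynomial.induction_on' with
  | add p q hp hq => rw [map_add]; exact add_mem hp hq
  | monomial n a =>
    rw [← C_mul_X_pow_eq_monomial, pev_monomial]
    refine mul_mem ?_ ?_
    · exact Subring.subset_closure (Or.inl ⟨a, rfl⟩)
    · exact Subring.subset_closure (Or.inr ⟨(n : ℚ) / M, (by positivity : (0:ℚ) ≤ (n:ℚ)/M), rfl⟩)

lemma nu_pev {M : ℕ} (hM : 1 ≤ M) (p : Polynomial E) (hp : p ≠ 0) :
    pev P M p ≠ 0 ∧ P.ν (pev P M p) = -((p.natDegree : ℚ) / M) := by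
  have hM' : (0 : ℚ) < (M : ℚ) := by exact_mod_cast hM
  suffices H : ∀ d : ℕ, ∀ p : Polynomial E, p ≠ 0 → p.natDegree = d →
      pev P M p ≠ 0 ∧ P.ν (pev P M p) = -((p.natDegree : ℚ) / M) from H _ p hp rfl
  intro d
  induction d using Nat.strong_induction_on with
  | _ d ih =>
  intro p hp hd
  have hlc : p.leadingCoeff ≠ 0 := leadingCoeff_ne_zero.mpr hp
  have hkey : p.eraseLead + C p.leadingCoeff * X ^ p.natDegree = p :=
    eraseLead_add_C_mul_X_pow p
  have hleadne : pev P M (C p.leadingCoeff * X ^ p.natDegree) ≠ 0 := by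
    rw [pev_monomial]
    exact mul_ne_zero (emb_ne_zero P hlc) (mono_ne_zero P _)
  have hleadnu : P.ν (pev P M (C p.leadingCoeff * X ^ p.natDegree)) =
      -((p.natDegree : ℚ) / M) := by
    rw [pev_monomial, P.ν_mul _ _ (emb_ne_zero P hlc) (mono_ne_zero P _),
      P.ν_emb _ hlc, P.ν_mono, zero_add]
  rcases eq_or_ne p.eraseLead 0 with h0 | h0
  · rw [h0, zero_add] at hkey
    rw [← hkey]
    exact ⟨hleadne, by rw [hleadnu, hkey]⟩
  · have hlt : p.eraseLead.natDegree < p.natDegree :=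
      (p.eraseLead_natDegree_lt_or_eraseLead_eq_zero).resolve_right h0
    obtain ⟨hne, hnu⟩ := ih p.eraseLead.natDegree (hd ▸ hlt) p.eraseLead h0 rfl
    have hltq : P.ν (pev P M (C p.leadingCoeff * X ^ p.natDegree)) < P.ν (pev P M p.eraseLead) := by
      rw [hleadnu, hnu]
      have hcast : (p.eraseLead.natDegree : ℚ) < (p.natDegree : ℚ) := by exact_mod_cast hlt
      gcongr
    obtain ⟨hs, hν⟩ := nu_add_eq P hleadne hne hltq
    have hsum : pev P M (C p.leadingCoeff * X ^ p.natDegree) + pev P M p.eraseLead = pev P M p := by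
      rw [← map_add, add_comm, hkey]
    rw [hsum] at hs hν
    exact ⟨hs, by rw [hν, hleadnu]⟩

lemma cf_of_poly {M : ℕ} (hM : 1 ≤ M) :
    ∀ d : ℕ, ∀ b a : Polynomial E, b ≠ 0 → b.natDegree ≤ d →
    ∃ (n : ℕ) (f zs : ℕ → P.K), zs 0 = pev P M a / pev P M b ∧
      (∀ i < n, P.CFStep f zs i) ∧ f n ∈ P.Abar ∧ zs n = f n := by
  have hM' : (0 : ℚ) < (M : ℚ) := by exact_mod_cast hM
  intro d
  induction d using Nat.strong_induction_on with
  | _ d ih =>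
  intro b a hb hbd
  have hc0 : b.leadingCoeff ≠ 0 := leadingCoeff_ne_zero.mpr hb
  have hcinv : (b.leadingCoeff)⁻¹ ≠ 0 := inv_ne_zero hc0
  set b' := b * C (b.leadingCoeff)⁻¹ with hb'def
  have hb'monic : b'.Monic := monic_mul_leadingCoeff_inv hb
  have hb'0 : b' ≠ 0 := hb'monic.ne_zero
  have hb'deg : b'.natDegree = b.natDegree := natDegree_mul_C hcinv
  set a' := a * C (b.leadingCoeff)⁻¹ with ha'def
  have hbne : pev P M b' ≠ 0 := (nu_pev P hM b' hb'0).1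
  have hcne : pev P M (C (b.leadingCoeff)⁻¹) ≠ 0 := by
    rw [pev_C]; exact emb_ne_zero P hcinv
  have hz : pev P M a / pev P M b = pev P M a' / pev P M b' := by
    rw [ha'def, hb'def, map_mul, map_mul, mul_div_mul_right _ _ hcne]
  set q := a' /ₘ b' with hqdef
  set r := a' %ₘ b' with hrdef
  have hkey : r + b' * q = a' := modByMonic_add_div a' b'
  have hzq : pev P M a' / pev P M b' = pev P M q + pev P M r / pev P M b' := by
    rw [← hkey, map_add, map_mul]
    field_simp
    ring
  by_cases hr : r = 0
  · refine ⟨0, fun _ => pev P M q, fun _ => pev P M a / pev P M b, rfl, by simp,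
      pev_mem_Abar P hM q, ?_⟩
    rw [hz, hzq, hr, map_zero, zero_div, add_zero]
  · have hdr : r.natDegree < b.natDegree := by
      have h1 : r.degree < b'.degree := degree_modByMonic_lt a' hb'monic
      have h2 := natDegree_lt_natDegree hr h1
      rwa [hb'deg] at h2
    obtain ⟨hrne, hrnu⟩ := nu_pev P hM r hr
    have hbnu := (nu_pev P hM b' hb'0).2
    have hdiffne : pev P M r / pev P M b' ≠ 0 := div_ne_zero hrne hbne
    have hdiffnu : 0 < P.ν (pev P M r / pev P M b') := by
      rw [div_eq_mul_inv, P.ν_mul _ _ hrne (inv_ne_zero hbne), nu_inv P hbne, hrnu, hbnu,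
        hb'deg, neg_neg]
      have hcast : (r.natDegree : ℚ) < (b.natDegree : ℚ) := by exact_mod_cast hdr
      have h2 : 0 < ((b.natDegree : ℚ) - r.natDegree) / M := div_pos (by linarith) hM'
      rw [sub_div] at h2
      linarith
    obtain ⟨n', f', zs', h0', hstep', hmem', hlast'⟩ :=
      ih r.natDegree (lt_of_lt_of_le hdr hbd) r b' hr le_rfl
    have hzsub : pev P M a / pev P M b - pev P M q = pev P M r / pev P M b' := by
      rw [hz, hzq]; ring
    refine ⟨n' + 1, fun i => Nat.casesOn i (pev P M q) f',
      fun i => Nat.casesOn i (pev P M a / pev P M b) zs', rfl, ?_, hmem', hlast'⟩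
    intro i hi
    cases i with
    | zero =>
      refine ⟨pev_mem_Abar P hM q, ?_, ?_, ?_⟩
      · show 0 < P.ν (pev P M a / pev P M b - pev P M q)
        rw [hzsub]; exact hdiffnu
      · show pev P M a / pev P M b ≠ pev P M q
        exact sub_ne_zero.mp (hzsub ▸ hdiffne)
      · show zs' 0 = (pev P M a / pev P M b - pev P M q)⁻¹
        rw [h0', hzsub, inv_div]
    | succ j =>
      exact hstep' j (by omega)

lemma pev_comp_pow {M k : ℕ} (hM : M ≠ 0) (hk : k ≠ 0) (p : Polynomial E) :
    pev P M p = pev P (M * k) (p.comp (X ^ k)) := by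
  have hMq : ((M : ℚ)) ≠ 0 := Nat.cast_ne_zero.mpr hM
  have hkq : ((k : ℚ)) ≠ 0 := Nat.cast_ne_zero.mpr hk
  rw [pev, pev, coe_eval₂RingHom, coe_eval₂RingHom, eval₂_comp, eval₂_pow, eval₂_X,
    mono_pow]
  congr 2
  push_cast
  field_simp

lemma mem_range_pev_of_Abar {x : P.K} (hx : x ∈ P.Abar) :
    ∃ M, 1 ≤ M ∧ ∃ p : Polynomial E, pev P M p = x := by
  induction hx using Subring.closure_induction with
  | mem x hx =>
    rcases hx with ⟨e, rfl⟩ | ⟨r, hr, rfl⟩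
    · exact ⟨1, le_rfl, C e, pev_C P 1 e⟩
    · refine ⟨r.den, r.pos, X ^ r.num.toNat, ?_⟩
      rw [pev_X_pow]
      congr 1
      have hnum : ((r.num.toNat : ℚ)) = (r.num : ℚ) := by
        exact_mod_cast congrArg (fun z : ℤ => (z : ℚ)) (Int.toNat_of_nonneg (Rat.num_nonneg.mpr hr))
      rw [hnum, Rat.num_div_den]
  | zero => exact ⟨1, le_rfl, 0, map_zero _⟩
  | one => exact ⟨1, le_rfl, 1, map_one _⟩
  | add x y hx hy ihx ihy =>
    obtain ⟨M1, hM1, p1, hp1⟩ := ihx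
    obtain ⟨M2, hM2, p2, hp2⟩ := ihy
    refine ⟨M1 * M2, Nat.one_le_iff_ne_zero.mpr (Nat.mul_ne_zero (by omega) (by omega)),
      p1.comp (X ^ M2) + p2.comp (X ^ M1), ?_⟩
    rw [map_add, ← pev_comp_pow P (M := M1) (k := M2) (by omega) (by omega) p1,
      show M1 * M2 = M2 * M1 from Nat.mul_comm _ _,
      ← pev_comp_pow P (M := M2) (k := M1) (by omega) (by omega) p2, hp1, hp2]
  | neg x hx ihx =>
    obtain ⟨M1, hM1, p1, hp1⟩ := ihx
    exact ⟨M1, hM1, -p1, by rw [map_neg, hp1]⟩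
  | mul x y hx hy ihx ihy =>
    obtain ⟨M1, hM1, p1, hp1⟩ := ihx
    obtain ⟨M2, hM2, p2, hp2⟩ := ihy
    refine ⟨M1 * M2, Nat.one_le_iff_ne_zero.mpr (Nat.mul_ne_zero (by omega) (by omega)),
      p1.comp (X ^ M2) * p2.comp (X ^ M1), ?_⟩
    rw [map_mul, ← pev_comp_pow P (M := M1) (k := M2) (by omega) (by omega) p1,
      show M1 * M2 = M2 * M1 from Nat.mul_comm _ _,
      ← pev_comp_pow P (M := M2) (k := M1) (by omega) (by omega) p2, hp1, hp2]

lemma exists_rep {z : P.K} (hz : z ∈ P.ktilde) :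
    ∃ M, 1 ≤ M ∧ ∃ a b : Polynomial E, b ≠ 0 ∧ z = pev P M a / pev P M b := by
  rw [ktilde, Subfield.mem_closure_iff] at hz
  obtain ⟨x, hx, y, hy, hxy⟩ := hz
  rw [Subring.closure_eq] at hx hy
  by_cases hy0 : y = 0
  · refine ⟨1, le_rfl, 0, 1, one_ne_zero, ?_⟩
    rw [← hxy, hy0, map_zero, map_one, div_zero, zero_div]
  · obtain ⟨M1, hM1, p1, hp1⟩ := mem_range_pev_of_Abar P hx
    obtain ⟨M2, hM2, p2, hp2⟩ := mem_range_pev_of_Abar P hy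
    refine ⟨M1 * M2, Nat.one_le_iff_ne_zero.mpr (Nat.mul_ne_zero (by omega) (by omega)),
      p1.comp (X ^ M2), p2.comp (X ^ M1), ?_, ?_⟩
    · intro h0
      apply hy0
      rw [← hp2, pev_comp_pow P (M := M2) (k := M1) (by omega) (by omega) p2, show M2 * M1 = M1 * M2 from
        Nat.mul_comm _ _, h0, map_zero]
    · rw [← pev_comp_pow P (M := M1) (k := M2) (by omega) (by omega) p1,
        show M1 * M2 = M2 * M1 from Nat.mul_comm _ _,
        ← pev_comp_pow P (M := M2) (k := M1) (by omega) (by omega) p2, hp1, hp2, hxy]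

end PuiseuxCompletion


open PuiseuxCompletion in
/-- every `z ∈ k̃ = Quot(Ā)` has a terminating continued fraction:
the algorithm reaches a step with `z_n = f_n`. -/
theorem statement11 {E : Type u} [Field E] (P : PuiseuxCompletion E)
    (z : P.K) (hz : z ∈ P.ktilde) :
    ∃ (n : ℕ) (f zs : ℕ → P.K), zs 0 = z ∧ (∀ i < n, P.CFStep f zs i) ∧
      f n ∈ P.Abar ∧ zs n = f n := by
  obtain ⟨M, hM, a, b, hb, hzab⟩ := exists_rep P hz
  obtain ⟨n, f, zs, h0, hstep, hmem, hlast⟩ := cf_of_poly P hM b.natDegree b a hb le_rfl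
  exact ⟨n, f, zs, by rw [h0, hzab], hstep, hmem, hlast⟩
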